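/- arXiv:1311.5090 — 2 statements merged into one kernel-verified Lean document; each statement's English description precedes it below -/
import Mathlib

section
/- Let F be a prime field and P: F^n → F a polynomial. If bias(P) := |E_x e_F(P(x))| ≥ δ, then for any two distinct field elements a ≠ b, the distributions μ_a(t) := Pr_x[P(x) = a + t] and μ_b(t) := Pr_x[P(x) = b + t] on F satisfy ‖μ_a − μ_b‖_1 ≥ 4δ/|F|. -/
open scoped BigOperators
open Finset MvPolynomial

/-- `e_F(c) = exp(2πi c / p)`. -/
noncomputable def eF (p : ℕ) (c : ZMod p) : ℂ :=
  Complex.exp (2 * Real.pi * Complex.I * (c.val : ℂ) / (p : ℂ))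

/-- Expectation over a finite type. -/
noncomputable def expect {α : Type*} [Fintype α] (f : α → ℂ) : ℂ :=
  (∑ a, f a) / (Fintype.card α : ℂ)

/-- bias of an `F`-valued function. -/
noncomputable def bias {α : Type*} [Fintype α] (p : ℕ) (f : α → ZMod p) : ℝ :=
  ‖expect fun a => eF p (f a)‖

/-- Gowers uniformity norm `‖f‖_{U^k}`. -/
noncomputable def gowers {G : Type*} [AddCommGroup G] [Fintype G] (k : ℕ) (f : G → ℂ) : ℝ :=
  (‖expect fun xh : G × (Fin k → G) =>
    ∏ S : Finset (Fin k), (starRingEnd ℂ)^[k - S.card] (f (xh.1 + ∑ i ∈ S, xh.2 i))‖) ^ ((1:ℝ) / 2 ^ k)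

/-- Probability that a predicate holds for a uniformly random element. -/
noncomputable def prob {α : Type*} [Fintype α] (Q : α → Prop) [DecidablePred Q] : ℝ :=
  ((Finset.univ.filter Q).card : ℝ) / (Fintype.card α : ℝ)
lemma eF_eq_stdAddChar (p : ℕ) [NeZero p] (c : ZMod p) : eF p c = ZMod.stdAddChar c := by
  rw [ZMod.stdAddChar_apply, ZMod.toCircle_apply, eF]

lemma eF_add (p : ℕ) [NeZero p] (c d : ZMod p) : eF p (c + d) = eF p c * eF p d := by
  simp [eF_eq_stdAddChar, AddChar.map_add_eq_mul]

lemma eF_abs (p : ℕ) [NeZero p] (c : ZMod p) : ‖eF p c‖ = 1 := by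
  rw [eF_eq_stdAddChar, ZMod.stdAddChar_apply, Circle.norm_coe]

lemma eF_gap (p : ℕ) [Fact p.Prime] {c : ZMod p} (hc : c ≠ 0) :
    4 / p ≤ ‖eF p c - 1‖ := by
  have hp : 0 < p := (Fact.out : p.Prime).pos
  set j : ℤ := c.valMinAbs with hjdef
  have hj : ((j : ℤ) : ZMod p) = c := c.coe_valMinAbs
  have hj0 : j ≠ 0 := fun h => hc (by rwa [ZMod.valMinAbs_eq_zero] at h)
  have hjabs : (1 : ℝ) ≤ |(j : ℝ)| := by
    have : (1 : ℤ) ≤ |j| := Int.one_le_abs (by exact_mod_cast hj0)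
    calc (1:ℝ) ≤ (|j| : ℤ) := by exact_mod_cast this
      _ = |(j : ℝ)| := by push_cast; rfl
  have hjle : |(j : ℝ)| ≤ p / 2 := by
    have h1 : j.natAbs ≤ p / 2 := c.natAbs_valMinAbs_le
    have h2 : ((p / 2 : ℕ) : ℝ) ≤ (p : ℝ) / 2 := by
      exact_mod_cast Nat.cast_div_le
    calc |(j : ℝ)| = (j.natAbs : ℝ) := by
          simp [Nat.cast_natAbs]
      _ ≤ ((p / 2 : ℕ) : ℝ) := by exact_mod_cast h1
      _ ≤ (p : ℝ) / 2 := h2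
  set θ : ℝ := 2 * Real.pi * j / p with hθdef
  have heF : eF p c = Complex.exp ((θ : ℂ) * Complex.I) := by
    rw [← hj, eF_eq_stdAddChar, ZMod.stdAddChar_coe]
    congr 1
    push_cast [hθdef]
    ring
  have hz : eF p c - 1 = ((Real.cos θ - 1 : ℝ) : ℂ) + ((Real.sin θ : ℝ) : ℂ) * Complex.I := by
    rw [heF, Complex.exp_mul_I, ← Complex.ofReal_cos, ← Complex.ofReal_sin]
    push_cast
    ring
  have hnsq : (‖eF p c - 1‖) ^ 2 = 2 - 2 * Real.cos θ := by
    rw [hz, Complex.sq_norm, Complex.normSq_add_mul_I]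
    linear_combination Real.sin_sq_add_cos_sq θ
  have hθabs : |θ| ≤ Real.pi := by
    have hppos : (0:ℝ) < p := by exact_mod_cast hp
    have : |θ| = 2 * Real.pi * |(j:ℝ)| / p := by
      rw [hθdef, abs_div, abs_mul, abs_of_nonneg (by positivity : (0:ℝ) ≤ 2 * Real.pi),
        abs_of_nonneg hppos.le]
    rw [this, div_le_iff₀ hppos]
    nlinarith [mul_le_mul_of_nonneg_left hjle (by positivity : (0:ℝ) ≤ 2 * Real.pi)]
  have hcos : Real.cos θ ≤ 1 - 2 / Real.pi ^ 2 * θ ^ 2 :=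
    Real.cos_le_one_sub_mul_cos_sq hθabs
  have hppos : (0:ℝ) < p := by exact_mod_cast hp
  have hθsq : (2 * Real.pi / p) ^ 2 ≤ θ ^ 2 := by
    have h1 : (2 * Real.pi / p) ≤ |θ| := by
      have : |θ| = 2 * Real.pi * |(j:ℝ)| / p := by
        rw [hθdef, abs_div, abs_mul, abs_of_nonneg (by positivity : (0:ℝ) ≤ 2 * Real.pi),
          abs_of_nonneg hppos.le]
      rw [this, div_le_div_iff₀ hppos hppos]
      nlinarith [mul_nonneg (mul_nonneg (by linarith : (0:ℝ) ≤ |(j:ℝ)| - 1)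
        (by positivity : (0:ℝ) ≤ 2 * Real.pi)) hppos.le]
    calc (2 * Real.pi / p) ^ 2 ≤ |θ| ^ 2 := by
          apply pow_le_pow_left₀ (by positivity) h1
      _ = θ ^ 2 := sq_abs θ
  have hkey : (4 / p : ℝ) ^ 2 ≤ (‖eF p c - 1‖) ^ 2 := by
    rw [hnsq]
    have hπ : (0:ℝ) < Real.pi := Real.pi_pos
    have : 2 / Real.pi ^ 2 * (2 * Real.pi / p) ^ 2 ≤ 2 / Real.pi ^ 2 * θ ^ 2 := by
      apply mul_le_mul_of_nonneg_left hθsq (by positivity)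
    have heq : 2 / Real.pi ^ 2 * (2 * Real.pi / p) ^ 2 = 8 / p ^ 2 := by
      field_simp; ring
    have h16 : (4 / (p:ℝ)) ^ 2 = 16 / (p:ℝ) ^ 2 := by rw [div_pow]; norm_num
    have h8 : 8 / (p:ℝ) ^ 2 ≤ 2 / Real.pi ^ 2 * θ ^ 2 := heq ▸ this
    rw [h16]
    calc 16 / (p:ℝ) ^ 2 = 2 * (8 / (p:ℝ) ^ 2) := by ring
      _ ≤ 2 * (2 / Real.pi ^ 2 * θ ^ 2) := by
          exact mul_le_mul_of_nonneg_left h8 (by norm_num)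
      _ ≤ 2 - 2 * Real.cos θ := by linarith
  have h40 : (0:ℝ) ≤ 4 / p := by positivity
  nlinarith [norm_nonneg (eF p c - 1)]

theorem stmt0 (p n : ℕ) [Fact p.Prime] (Q : MvPolynomial (Fin n) (ZMod p)) (δ : ℝ)
    (hδ : δ ≤ bias p (fun x : Fin n → ZMod p => eval x Q))
    (a b : ZMod p) (hab : a ≠ b) :
    4 * δ / p ≤ ∑ t : ZMod p,
      |prob (fun x : Fin n → ZMod p => eval x Q = a + t)
        - prob (fun x : Fin n → ZMod p => eval x Q = b + t)| := by
  classical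
  have hp : 0 < p := (Fact.out : p.Prime).pos
  haveI : NeZero p := ⟨hp.ne'⟩
  have hppos : (0:ℝ) < p := by exact_mod_cast hp
  set ν : ZMod p → ℝ := fun s => prob (fun x : Fin n → ZMod p => eval x Q = s) with hν
  have hνdef : ∀ s, prob (fun x : Fin n → ZMod p => eval x Q = s) = ν s := fun _ => rfl
  simp only [hνdef]
  -- trivial case δ ≤ 0
  rcases le_or_gt δ 0 with h0 | h0
  · have h1 : 4 * δ / p ≤ 0 := by
      apply div_nonpos_of_nonpos_of_nonneg (by linarith) hppos.le
    refine h1.trans (Finset.sum_nonneg fun t _ => abs_nonneg _)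
  set T : ℂ := ∑ s : ZMod p, ((ν s : ℝ) : ℂ) * eF p s with hT
  -- bias equals |T|
  have hexp : (expect fun x : Fin n → ZMod p => eF p (eval x Q)) = T := by
    show (∑ x : Fin n → ZMod p, eF p (eval x Q)) / (Fintype.card (Fin n → ZMod p) : ℂ) = T
    rw [hT,
      ← Finset.sum_fiberwise' Finset.univ (fun x : Fin n → ZMod p => eval x Q)
        (fun s => eF p s), Finset.sum_div]
    refine Finset.sum_congr rfl fun s _ => ?_
    rw [Finset.sum_const, hν]
    simp only [prob]
    push_cast
    have hcard : ((Fintype.card (Fin n → ZMod p) : ℝ) : ℂ) ≠ 0 := by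
      exact_mod_cast (Nat.cast_ne_zero (R := ℂ)).mpr Fintype.card_ne_zero
    push_cast at hcard ⊢
    field_simp
    rw [nsmul_eq_mul]
  have hbias : bias p (fun x : Fin n → ZMod p => eval x Q) = ‖T‖ := by
    rw [bias, hexp]
  -- shifted sums
  have hshift : ∀ c : ZMod p,
      ∑ t : ZMod p, ((ν (c + t) : ℝ) : ℂ) * eF p t = eF p (-c) * T := by
    intro c
    calc ∑ t : ZMod p, ((ν (c + t) : ℝ) : ℂ) * eF p t
        = ∑ s : ZMod p, ((ν s : ℝ) : ℂ) * (eF p s * eF p (-c)) := by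
          rw [← Equiv.sum_comp (Equiv.addLeft c)
            (fun s => ((ν s : ℝ) : ℂ) * (eF p s * eF p (-c)))]
          refine Finset.sum_congr rfl fun t _ => ?_
          simp only [Equiv.coe_addLeft]
          rw [← eF_add]
          congr 2
          ring
      _ = eF p (-c) * T := by
          rw [hT, Finset.mul_sum]
          exact Finset.sum_congr rfl fun s _ => by ring
  set S : ℂ := ∑ t : ZMod p, ((ν (a + t) - ν (b + t) : ℝ) : ℂ) * eF p t with hS
  have hSval : S = (eF p (b - a) - 1) * eF p (-b) * T := by
    have h1 : S = ∑ t : ZMod p, (((ν (a + t) : ℝ) : ℂ) * eF p t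
        - ((ν (b + t) : ℝ) : ℂ) * eF p t) := by
      rw [hS]
      refine Finset.sum_congr rfl fun t _ => ?_
      push_cast
      ring
    have h2 : eF p (b - a) * eF p (-b) = eF p (-a) := by
      rw [← eF_add]
      congr 1
      ring
    rw [h1, Finset.sum_sub_distrib, hshift a, hshift b]
    linear_combination (-T) * h2
  -- upper bound on |S|
  have hupper : ‖S‖ ≤ ∑ t : ZMod p, |ν (a + t) - ν (b + t)| := by
    rw [hS]
    refine (norm_sum_le _ _).trans_eq ?_
    refine Finset.sum_congr rfl fun t _ => ?_
    rw [norm_mul, eF_abs, mul_one, Complex.norm_real, Real.norm_eq_abs]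
  -- lower bound
  have hgap : 4 / (p : ℝ) ≤ ‖eF p (b - a) - 1‖ :=
    eF_gap p (sub_ne_zero.mpr (Ne.symm hab))
  have habsS : ‖S‖ = ‖eF p (b - a) - 1‖ * ‖T‖ := by
    rw [hSval, norm_mul, norm_mul, eF_abs, mul_one]
  calc 4 * δ / p = (4 / p) * δ := by ring
    _ ≤ (4 / p) * ‖T‖ := by
        apply mul_le_mul_of_nonneg_left (hδ.trans_eq hbias) (by positivity)
    _ ≤ ‖eF p (b - a) - 1‖ * ‖T‖ := by
        apply mul_le_mul_of_nonneg_right hgap (norm_nonneg _)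
    _ = ‖S‖ := habsS.symm
    _ ≤ _ := hupper
end

section
/- Vanishing linear combination gives degree bound reduction: Suppose P_1,…,P_m: F^n → F are polynomials and for some r ≥ 1 and coefficients c_{i,I} ∈ F (i ∈ [m], I ⊆ [r]) not all zero, the polynomial identity Σ_{i,I} c_{i,I} P_i(x + Σ_{j∈I} y_j) ≡ 0 holds in the variables x, y_1,…,y_r. If I₀ is maximal (under inclusion) among sets with some c_{i,I₀} ≠ 0 and c_{i₀,I₀} ≠ 0, then the polynomial Σ_i c_{i,I₀}·D_{h_1}⋯D_{h_{|I₀|}} P_i is identically zero for all directions h_1,…,h_{|I₀|} obtained from restricting to the coordinates of y_j, j ∈ I₀. -/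
open scoped BigOperators
open Finset MvPolynomial

lemma aux_pow {F : Type*} [Field F] {k : ℕ} (T : Finset (Fin k)) :
    (-1:F)^(k - T.card) = (-1)^k * (-1)^T.card := by
  have hle : T.card ≤ k := by
    simpa using Finset.card_le_card (Finset.subset_univ T)
  have h1 : (-1:F)^(k - T.card) * (-1)^T.card = (-1)^k := by
    rw [← pow_add, Nat.sub_add_cancel hle]
  calc (-1:F)^(k-T.card) = (-1)^(k-T.card) * ((-1)^T.card * (-1)^T.card) := by
        rw [← pow_add, Even.neg_one_pow ⟨T.card, rfl⟩, mul_one]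
    _ = (-1)^k * (-1)^T.card := by rw [← mul_assoc, h1]

lemma aux_powerset {F : Type*} [Field F] {α : Type*} [DecidableEq α] (s : Finset α)
    (hs : s ≠ ∅) : ∑ C ∈ s.powerset, (-1:F)^C.card = 0 := by
  have := Finset.sum_powerset_neg_one_pow_card (x := s)
  rw [if_neg hs] at this
  calc ∑ C ∈ s.powerset, (-1:F)^C.card
      = ((∑ C ∈ s.powerset, (-1:ℤ)^C.card : ℤ) : F) := by push_cast; ring
    _ = 0 := by rw [this]; simp

lemma aux_cancel {F : Type*} [Field F] {k : ℕ} (A : Finset (Fin k)) (hA : A ≠ univ)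
    (g : Finset (Fin k) → F) :
    ∑ T : Finset (Fin k), (-1:F)^(k - T.card) * g (T ∩ A) = 0 := by
  classical
  simp only [aux_pow, mul_assoc]
  rw [← Finset.mul_sum]
  have hbij : ∑ T : Finset (Fin k), (-1:F)^T.card * g (T ∩ A)
      = ∑ p ∈ A.powerset ×ˢ Aᶜ.powerset, (-1:F)^(p.1 ∪ p.2).card * g ((p.1 ∪ p.2) ∩ A) := by
    refine Finset.sum_nbij' (fun T => (T ∩ A, T \ A)) (fun p => p.1 ∪ p.2) ?_ ?_ ?_ ?_ ?_
    · intro T _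
      simp only [Finset.mem_product, Finset.mem_powerset]
      constructor
      · exact Finset.inter_subset_right
      · intro a ha; simp only [Finset.mem_sdiff] at ha; simp [ha.2]
    · intro p _; exact Finset.mem_univ _
    · intro T _; ext a; simp; tauto
    · intro p hp
      simp only [Finset.mem_product, Finset.mem_powerset] at hp
      obtain ⟨h1, h2⟩ := hp
      have hC : ∀ a ∈ p.2, a ∉ A := by intro a ha; simpa using h2 ha
      have : (p.1 ∪ p.2) ∩ A = p.1 := by
        ext a
        simp only [Finset.mem_inter, Finset.mem_union]
        constructor
        · rintro ⟨h3 | h3, h4⟩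
          · exact h3
          · exact absurd h4 (hC a h3)
        · intro h3; exact ⟨Or.inl h3, h1 h3⟩
      have h5 : (p.1 ∪ p.2) \ A = p.2 := by
        ext a
        simp only [Finset.mem_sdiff, Finset.mem_union]
        constructor
        · rintro ⟨h3 | h3, h4⟩
          · exact absurd (h1 h3) h4
          · exact h3
        · intro h3; exact ⟨Or.inr h3, hC a h3⟩
      simp [this, h5]
    · intro T _
      have hT : (T ∩ A) ∪ (T \ A) = T := by ext a; simp; tauto
      simp only [hT]
  rw [hbij, Finset.sum_product]
  have hz : ∀ B ∈ A.powerset, ∑ C ∈ Aᶜ.powerset, (-1:F)^(B ∪ C).card * g ((B ∪ C) ∩ A) = 0 := by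
    intro B hB
    rw [Finset.mem_powerset] at hB
    have : ∀ C ∈ Aᶜ.powerset, (-1:F)^(B ∪ C).card * g ((B ∪ C) ∩ A)
        = (-1:F)^C.card * ((-1:F)^B.card * g B) := by
      intro C hC
      rw [Finset.mem_powerset] at hC
      have hd : Disjoint B C := by
        refine Finset.disjoint_left.mpr fun a haB haC => ?_
        have := hC haC; simp only [Finset.mem_compl] at this; exact this (hB haB)
      have hcard : (B ∪ C).card = B.card + C.card := Finset.card_union_of_disjoint hd
      have hint : (B ∪ C) ∩ A = B := by
        ext a
        simp only [Finset.mem_inter, Finset.mem_union]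
        constructor
        · rintro ⟨h3 | h3, h4⟩
          · exact h3
          · have := hC h3; simp only [Finset.mem_compl] at this; exact absurd h4 this
        · intro h3; exact ⟨Or.inl h3, hB h3⟩
      rw [hcard, hint, pow_add]; ring
    rw [Finset.sum_congr rfl this, ← Finset.sum_mul,
      aux_powerset _ (by
        intro hc
        apply hA
        have := congrArg (·ᶜ) hc
        simpa using this
        ), zero_mul]
  rw [Finset.sum_congr rfl hz, Finset.sum_const_zero, mul_zero]

theorem stmt18 {F : Type*} [Field F] [Fintype F] (n m r : ℕ)
    (P : Fin m → MvPolynomial (Fin n) F) (c : Fin m → Finset (Fin r) → F)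
    (hzero : ∀ (x : Fin n → F) (y : Fin r → Fin n → F),
      ∑ i, ∑ I : Finset (Fin r), c i I * eval (x + ∑ j ∈ I, y j) (P i) = 0)
    (I₀ : Finset (Fin r)) (i₀ : Fin m) (hne : c i₀ I₀ ≠ 0)
    (hmax : ∀ (i : Fin m) (J : Finset (Fin r)), I₀ ⊂ J → c i J = 0) :
    ∀ (x : Fin n → F) (h : Fin I₀.card → Fin n → F),
      ∑ i, c i I₀ * ∑ S : Finset (Fin I₀.card),
          (-1 : F) ^ (I₀.card - S.card) * eval (x + ∑ j ∈ S, h j) (P i) = 0 := by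
  intro x h
  classical
  let e : Fin I₀.card → Fin r := fun t => ((I₀.orderIsoOfFin rfl t : I₀) : Fin r)
  have hemem : ∀ t, e t ∈ I₀ := fun t => (I₀.orderIsoOfFin rfl t).2
  -- step 1: for every T, the substituted identity
  have H : ∀ T : Finset (Fin I₀.card),
      ∑ i, ∑ I : Finset (Fin r),
        c i I * eval (x + ∑ t ∈ T.filter (fun t => e t ∈ I), h t) (P i) = 0 := by
    intro T
    have h0 := hzero x (fun j => ∑ t ∈ T.filter (fun t => e t = j), h t)
    rw [← h0]
    refine Finset.sum_congr rfl fun i _ => Finset.sum_congr rfl fun I _ => ?_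
    rw [← Finset.sum_fiberwise_eq_sum_filter T I e h]
  -- step 2: weighted sum of identities
  have key0 : ∑ T : Finset (Fin I₀.card), (-1:F)^(I₀.card - T.card) *
      (∑ i, ∑ I : Finset (Fin r),
        c i I * eval (x + ∑ t ∈ T.filter (fun t => e t ∈ I), h t) (P i)) = 0 := by
    simp only [H, mul_zero, Finset.sum_const_zero]
  -- step 3: rearrange sums
  have key : ∑ i, ∑ I : Finset (Fin r), c i I *
      ∑ T : Finset (Fin I₀.card), (-1:F)^(I₀.card - T.card) *
        eval (x + ∑ t ∈ T.filter (fun t => e t ∈ I), h t) (P i) = 0 := by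
    rw [← key0]
    simp only [Finset.mul_sum]
    calc ∑ i, ∑ I : Finset (Fin r), ∑ T : Finset (Fin I₀.card),
            c i I * ((-1:F)^(I₀.card - T.card) * eval (x + ∑ t ∈ T.filter (fun t => e t ∈ I), h t) (P i))
        = ∑ i, ∑ T : Finset (Fin I₀.card), ∑ I : Finset (Fin r),
            c i I * ((-1:F)^(I₀.card - T.card) * eval (x + ∑ t ∈ T.filter (fun t => e t ∈ I), h t) (P i)) :=
          Finset.sum_congr rfl fun i _ => Finset.sum_comm
      _ = ∑ T : Finset (Fin I₀.card), ∑ i, ∑ I : Finset (Fin r),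
            c i I * ((-1:F)^(I₀.card - T.card) * eval (x + ∑ t ∈ T.filter (fun t => e t ∈ I), h t) (P i)) :=
          Finset.sum_comm
      _ = _ := Finset.sum_congr rfl fun T _ => Finset.sum_congr rfl fun i _ =>
            Finset.sum_congr rfl fun I _ => by ring
  -- step 4: all I ≠ I₀ vanish
  rw [← key]
  refine Finset.sum_congr rfl fun i _ => ?_
  rw [Finset.sum_eq_single_of_mem I₀ (Finset.mem_univ _)]
  · congr 1
    refine Finset.sum_congr rfl fun T _ => ?_
    rw [Finset.filter_true_of_mem (fun t _ => hemem t)]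
  · intro I _ hI
    by_cases hsub : I₀ ⊆ I
    · rw [hmax i I ⟨hsub, fun hIs => hI (Finset.Subset.antisymm hIs hsub)⟩, zero_mul]
    · have hfilter : ∀ T : Finset (Fin I₀.card),
          T.filter (fun t => e t ∈ I) = T ∩ (univ.filter (fun t => e t ∈ I)) := by
        intro T; ext a; simp
      have hAne : (univ.filter (fun t : Fin I₀.card => e t ∈ I)) ≠ univ := by
        intro hu
        apply hsub
        intro a ha
        have heq : e ((I₀.orderIsoOfFin rfl).symm ⟨a, ha⟩) = a := by
          show ((I₀.orderIsoOfFin rfl) ((I₀.orderIsoOfFin rfl).symm ⟨a, ha⟩) : Fin r) = a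
          rw [OrderIso.apply_symm_apply]
        set t := (I₀.orderIsoOfFin rfl).symm ⟨a, ha⟩
        have ht := Finset.eq_univ_iff_forall.mp hu t
        rw [Finset.mem_filter] at ht
        rw [← heq]
        exact ht.2
      have hz := aux_cancel (univ.filter (fun t : Fin I₀.card => e t ∈ I)) hAne
        (fun S => eval (x + ∑ t ∈ S, h t) (P i))
      have h2 : ∑ T : Finset (Fin I₀.card), (-1:F)^(I₀.card - T.card) *
          eval (x + ∑ t ∈ T.filter (fun t => e t ∈ I), h t) (P i) = 0 := by
        rw [← hz]
        exact Finset.sum_congr rfl fun T _ => by rw [hfilter T]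
      rw [h2, mul_zero]
end
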